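/- Let sp = n, q, r ≥ 1 with 1 − 1/r − 1/q > 0, and set l = (p/r′)·(1 − 1/r − 1/q)^{−1}. If w ∈ L^{l,p}(Q_{R,R^{sp}}) ∩ L^{p,∞}(Q_{R,R^{sp}}), then w ∈ L^{pq′,pr′}(Q_{R,R^{sp}}) and ‖w‖_{L^{pq′,pr′}}^p ≤ R^{np/(l r′)} ( ‖w‖_{L^{p,∞}}^p + R^{−np/l} ‖w‖_{L^{l,p}}^p ). -/

import Mathlib

open MeasureTheory Metric

/-- Mixed space-time norm `‖u‖_{L^{q,r}} = (∫_J (∫_Ω |u|^q dx)^{r/q} dt)^{1/r}`. -/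
noncomputable def mixedNorm (n : ℕ) (q r : ℝ) (Ω : Set (EuclideanSpace ℝ (Fin n)))
    (J : Set ℝ) (u : EuclideanSpace ℝ (Fin n) → ℝ → ℝ) : ℝ :=
  (∫ t in J, (∫ x in Ω, |u x t| ^ q) ^ (r / q)) ^ (1 / r)

/-- Membership in the mixed space `L^{q,r}(Ω×J)`. -/
def MemMixed (n : ℕ) (q r : ℝ) (Ω : Set (EuclideanSpace ℝ (Fin n)))
    (J : Set ℝ) (u : EuclideanSpace ℝ (Fin n) → ℝ → ℝ) : Prop :=
  (∀ t ∈ J, IntegrableOn (fun x => |u x t| ^ q) Ω) ∧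
  IntegrableOn (fun t => (∫ x in Ω, |u x t| ^ q) ^ (r / q)) J

/-- The `L^{q,∞}` norm: supremum in time of the spatial `L^q` norm. -/
noncomputable def timeSupNorm (n : ℕ) (q : ℝ) (Ω : Set (EuclideanSpace ℝ (Fin n)))
    (J : Set ℝ) (u : EuclideanSpace ℝ (Fin n) → ℝ → ℝ) : ℝ :=
  ⨆ t ∈ J, (∫ x in Ω, |u x t| ^ q) ^ (1 / q)

/-- Membership in `L^{q,∞}(Ω×J)`. -/
def MemTimeSup (n : ℕ) (q : ℝ) (Ω : Set (EuclideanSpace ℝ (Fin n)))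
    (J : Set ℝ) (u : EuclideanSpace ℝ (Fin n) → ℝ → ℝ) : Prop :=
  (∀ t ∈ J, IntegrableOn (fun x => |u x t| ^ q) Ω) ∧
  BddAbove ((fun t => (∫ x in Ω, |u x t| ^ q) ^ (1 / q)) '' J)

/-- If `f ≥ 0` is measurable and `f^p` is integrable, then `f ∈ L^p`. -/
lemma aux_memLp {α : Type*} [MeasurableSpace α] {μ : Measure α} {f : α → ℝ}
    (hf : Measurable f) (hfn : ∀ x, 0 ≤ f x) {p : ℝ} (hp : 0 < p)
    (hint : Integrable (fun x => f x ^ p) μ) : MemLp f (ENNReal.ofReal p) μ := by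
  have h0 : ENNReal.ofReal p ≠ 0 := by simp [hp, hp.not_ge]
  have h1 : MemLp (fun x => ‖f x‖ ^ (ENNReal.ofReal p).toReal)
      (ENNReal.ofReal p / ENNReal.ofReal p) μ := by
    rw [ENNReal.div_self h0 ENNReal.ofReal_ne_top, memLp_one_iff_integrable]
    have : (fun x => ‖f x‖ ^ (ENNReal.ofReal p).toReal) = fun x => f x ^ p := by
      funext x
      rw [Real.norm_of_nonneg (hfn x), ENNReal.toReal_ofReal hp.le]
    rwa [this]
  exact (memLp_norm_rpow_iff hf.aestronglyMeasurable h0 ENNReal.ofReal_ne_top).mp h1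

/-- If `f ≥ 0` is in `L^p`, then `f^c ∈ L^{p/c}`. -/
lemma aux_memLp_rpow {α : Type*} [MeasurableSpace α] {μ : Measure α} {f : α → ℝ}
    (hfn : ∀ x, 0 ≤ f x) {p c : ℝ} (hc : 0 < c)
    (hm : MemLp f (ENNReal.ofReal p) μ) :
    MemLp (fun x => f x ^ c) (ENNReal.ofReal (p / c)) μ := by
  have h0 : ENNReal.ofReal c ≠ 0 := by simp [hc, hc.not_ge]
  have := (memLp_norm_rpow_iff (q := ENNReal.ofReal c) hm.aestronglyMeasurable h0
      ENNReal.ofReal_ne_top).mpr hm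
  have heq : (fun x => ‖f x‖ ^ (ENNReal.ofReal c).toReal) = fun x => f x ^ c := by
    funext x; rw [Real.norm_of_nonneg (hfn x), ENNReal.toReal_ofReal hc.le]
  rw [heq] at this
  rwa [← ENNReal.ofReal_div_of_pos hc] at this

/-- Hölder interpolation: `∫ f^(u+v) ≤ (∫ f^(ue))^(1/e) (∫ f^(ve'))^(1/e')`. -/
lemma aux_holder {α : Type*} [MeasurableSpace α] (μ : Measure α) (f : α → ℝ)
    (hf : Measurable f) (hfn : ∀ x, 0 ≤ f x) {e e' u v : ℝ}
    (hee' : e.HolderConjugate e') (hu : 0 < u) (hv : 0 < v)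
    (hFe : Integrable (fun x => f x ^ (u * e)) μ)
    (hGe : Integrable (fun x => f x ^ (v * e')) μ) :
    (∫ x, f x ^ (u + v) ∂μ) ≤
      (∫ x, f x ^ (u * e) ∂μ) ^ (1 / e) * (∫ x, f x ^ (v * e') ∂μ) ^ (1 / e') := by
  have he0 : 0 < e := hee'.pos
  have he'0 : 0 < e' := hee'.symm.pos
  have hMf : MemLp f (ENNReal.ofReal (u * e)) μ :=
    aux_memLp hf hfn (by positivity) hFe
  have hMg : MemLp f (ENNReal.ofReal (v * e')) μ :=
    aux_memLp hf hfn (by positivity) hGe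
  have hMF : MemLp (fun x => f x ^ u) (ENNReal.ofReal e) μ := by
    have := aux_memLp_rpow hfn hu hMf
    rwa [show u * e / u = e by field_simp] at this
  have hMG : MemLp (fun x => f x ^ v) (ENNReal.ofReal e') μ := by
    have := aux_memLp_rpow hfn hv hMg
    rwa [show v * e' / v = e' by field_simp] at this
  have h := integral_mul_le_Lp_mul_Lq_of_nonneg hee'
    (Filter.Eventually.of_forall fun x => Real.rpow_nonneg (hfn x) u)
    (Filter.Eventually.of_forall fun x => Real.rpow_nonneg (hfn x) v) hMF hMG
  have h1 : ∀ x, f x ^ u * f x ^ v = f x ^ (u + v) := fun x =>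
    (Real.rpow_add' (hfn x) (by positivity)).symm
  have h2 : ∀ x, (f x ^ u) ^ e = f x ^ (u * e) := fun x =>
    (Real.rpow_mul (hfn x) u e).symm
  have h3 : ∀ x, (f x ^ v) ^ e' = f x ^ (v * e') := fun x =>
    (Real.rpow_mul (hfn x) v e').symm
  simp_rw [h1, h2, h3] at h
  exact h

/-- pointwise bound `x^a ≤ x^p + x^l` for `p ≤ a ≤ l`. -/
lemma aux_rpow_bound {x p a l : ℝ} (hx : 0 ≤ x) (hp : 0 < p) (hpa : p ≤ a) (hal : a ≤ l) :
    x ^ a ≤ x ^ p + x ^ l := by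
  rcases le_total x 1 with h | h
  · have h1 := Real.rpow_le_rpow_of_exponent_ge' hx h hp.le hpa
    have h2 : 0 ≤ x ^ l := Real.rpow_nonneg hx l
    linarith
  · have h1 := Real.rpow_le_rpow_of_exponent_le h hal
    have h2 : 0 ≤ x ^ p := Real.rpow_nonneg hx p
    linarith

set_option maxHeartbeats 1000000 in
theorem interpolation_critical (n : ℕ) (s p q r R T : ℝ)
    (hs0 : 0 < s) (hs1 : s < 1) (hp : 2 ≤ p) (hspn : s * p = n) (hR : 0 < R)
    (hq : 1 ≤ q) (hr : 1 ≤ r) (hqr : 0 < 1 - 1 / r - 1 / q)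
    (l : ℝ) (hl : l = p / (r / (r - 1)) * (1 - 1 / r - 1 / q)⁻¹)
    (w : EuclideanSpace ℝ (Fin n) → ℝ → ℝ)
    (hmeas : Measurable (Function.uncurry w))
    (hmemS : MemMixed n l p (ball (0 : EuclideanSpace ℝ (Fin n)) R)
      (Set.Ioc (T - R ^ (s * p)) T) w)
    (hmemI : MemTimeSup n p (ball (0 : EuclideanSpace ℝ (Fin n)) R)
      (Set.Ioc (T - R ^ (s * p)) T) w) :
    MemMixed n (p * (q / (q - 1))) (p * (r / (r - 1)))
        (ball (0 : EuclideanSpace ℝ (Fin n)) R) (Set.Ioc (T - R ^ (s * p)) T) w ∧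
    mixedNorm n (p * (q / (q - 1))) (p * (r / (r - 1)))
        (ball (0 : EuclideanSpace ℝ (Fin n)) R) (Set.Ioc (T - R ^ (s * p)) T) w ^ p
      ≤ R ^ ((n : ℝ) * p / (l * (r / (r - 1)))) *
        (timeSupNorm n p (ball (0 : EuclideanSpace ℝ (Fin n)) R)
            (Set.Ioc (T - R ^ (s * p)) T) w ^ p
          + R ^ (-(n : ℝ) * p / l) *
            mixedNorm n l p (ball (0 : EuclideanSpace ℝ (Fin n)) R)
              (Set.Ioc (T - R ^ (s * p)) T) w ^ p) := by
  have hp0 : (0:ℝ) < p := by linarith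
  have hr0 : (0:ℝ) < r := by linarith
  have hq0 : (0:ℝ) < q := by linarith
  have hq1 : 1 < q := by
    by_contra h
    push_neg at h
    have hqe : q = 1 := le_antisymm h hq
    rw [hqe] at hqr
    have : 0 < 1 / r := one_div_pos.mpr hr0
    norm_num at hqr
    linarith
  have hr1 : 1 < r := by
    by_contra h
    push_neg at h
    have hre : r = 1 := le_antisymm h hr
    rw [hre] at hqr
    have : 0 < 1 / q := one_div_pos.mpr hq0
    norm_num at hqr
    linarith
  have hrm : (0:ℝ) < r - 1 := by linarith
  have hqm : (0:ℝ) < q - 1 := by linarith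
  set Ω := ball (0 : EuclideanSpace ℝ (Fin n)) R with hΩdef
  set J := Set.Ioc (T - R ^ (s * p)) T with hJdef
  clear_value Ω J
  set r' := r / (r - 1) with hr'def
  set q' := q / (q - 1) with hq'def
  clear_value r' q'
  have hr'0 : 0 < r' := by rw [hr'def]; exact div_pos hr0 hrm
  have hq'0 : 0 < q' := by rw [hq'def]; exact div_pos hq0 hqm
  have hr'1 : 1 < r' := by rw [hr'def, lt_div_iff₀ hrm]; linarith
  have hq'1 : 1 < q' := by rw [hq'def, lt_div_iff₀ hqm]; linarith
  have hrr' : 1 / r + 1 / r' = 1 := by rw [hr'def]; field_simp; ring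
  have hqq' : 1 / q + 1 / q' = 1 := by rw [hq'def]; field_simp; ring
  have hl0 : 0 < l := by
    rw [hl]
    exact mul_pos (div_pos hp0 hr'0) (inv_pos.mpr hqr)
  have hDpos : 0 < (r - 1) * q - r := by
    have key : (1 - 1 / r - 1 / q) * (r * q) = (r - 1) * q - r := by
      field_simp
    have h := mul_pos hqr (mul_pos hr0 hq0)
    linarith [key ▸ h]
  have hP : p = l * r' * (1 - 1 / r - 1 / q) := by
    rw [hl, hr'def]
    field_simp
  set a := p * q' with hadef
  set b := p * r' with hbdef
  clear_value a b
  have ha0 : 0 < a := by rw [hadef]; exact mul_pos hp0 hq'0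
  have hb0 : 0 < b := by rw [hbdef]; exact mul_pos hp0 hr'0
  have hba0 : 0 < b / a := div_pos hb0 ha0
  have hpa : p ≤ a := by
    rw [hadef]
    have h1 : p * 1 ≤ p * q' := mul_le_mul_of_nonneg_left hq'1.le hp0.le
    linarith
  have hal : a ≤ l := by
    have hkey : r' * (1 - 1 / r - 1 / q) * q' = (q - r') / (q - 1) := by
      rw [hr'def, hq'def]; field_simp
    have h2 : r' * (1 - 1 / r - 1 / q) * q' ≤ 1 := by
      rw [hkey, div_le_one hqm]; linarith
    calc a = p * q' := hadef
      _ = l * (r' * (1 - 1 / r - 1 / q) * q') := by rw [hP]; ring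
      _ ≤ l * 1 := by exact mul_le_mul_of_nonneg_left h2 hl0.le
      _ = l := mul_one l
  have hq'r : q' < r := by
    have h1 : 1 / r < 1 / q' := by
      have : 1 / q' = 1 - 1 / q := by linarith
      rw [this]; linarith
    have h2 := (div_lt_div_iff₀ hr0 hq'0).mp h1
    linarith
  set e := r / q' with hedef
  set e' := r' * l / (p * q') with he'def
  clear_value e e'
  have he0 : 0 < e := by rw [hedef]; exact div_pos hr0 hq'0
  have he'0 : 0 < e' := by
    rw [he'def]; positivity
  have hcon : e.HolderConjugate e' := by
    rw [Real.holderConjugate_iff]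
    constructor
    · rw [hedef, lt_div_iff₀ hq'0]; linarith
    · rw [hedef, he'def, hP, hr'def, hq'def]
      field_simp
      ring
  -- pointwise-in-time data
  have hwt : ∀ t : ℝ, Measurable fun x => |w x t| := fun t =>
    (hmeas.comp measurable_prodMk_right).abs
  have hAnn : ∀ (t : ℝ) (c : ℝ), 0 ≤ ∫ x in Ω, |w x t| ^ c := fun t c =>
    integral_nonneg fun x => Real.rpow_nonneg (abs_nonneg _) _
  -- spatial integrability at exponent a
  have hInt_a : ∀ t ∈ J, IntegrableOn (fun x => |w x t| ^ a) Ω := by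
    intro t tm
    refine Integrable.mono' ((hmemI.1 t tm).add (hmemS.1 t tm))
      (((Real.continuous_rpow_const ha0.le).measurable.comp (hwt t)).aestronglyMeasurable)
      (Filter.Eventually.of_forall fun x => ?_)
    rw [Real.norm_of_nonneg (Real.rpow_nonneg (abs_nonneg _) _)]
    exact aux_rpow_bound (abs_nonneg _) hp0 hpa hal
  -- Hölder per time slice
  have hHold : ∀ t ∈ J, (∫ x in Ω, |w x t| ^ a) ≤
      (∫ x in Ω, |w x t| ^ p) ^ (1 / e) * (∫ x in Ω, |w x t| ^ l) ^ (1 / e') := by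
    intro t tm
    have hu : 0 < a / r := div_pos ha0 hr0
    have hv : 0 < a / r' := div_pos ha0 hr'0
    have hue : a / r * e = p := by
      rw [hedef, hadef]; field_simp
    have hve : a / r' * e' = l := by
      rw [he'def, hadef]; field_simp
    have huv : a / r + a / r' = a := by
      calc a / r + a / r' = a * (1 / r + 1 / r') := by ring
        _ = a := by rw [hrr', mul_one]
    have h := aux_holder (volume.restrict Ω) _ (hwt t) (fun x => abs_nonneg _) hcon hu hv
      (by rw [hue]; exact hmemI.1 t tm) (by rw [hve]; exact hmemS.1 t tm)
    rwa [huv, hue, hve] at h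
  -- sup-norm control
  set S := timeSupNorm n p Ω J w with hSdef
  have hJm : MeasurableSet J := by rw [hJdef]; exact measurableSet_Ioc
  have hTJ : T ∈ J := by
    rw [hJdef]
    constructor
    · have := Real.rpow_pos_of_pos hR (s * p); linarith
    · exact le_refl T
  have hgS : ∀ t ∈ J, (∫ x in Ω, |w x t| ^ p) ^ (1 / p) ≤ S := by
    have hbd : BddAbove (Set.range fun t : J => (∫ x in Ω, |w x t| ^ p) ^ (1 / p)) := by
      have h2 := hmemI.2
      rwa [Set.image_eq_range] at h2
    have hSsup : sSup ((fun t => (∫ x in Ω, |w x t| ^ p) ^ (1 / p)) '' J) = S := by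
      rw [hSdef, timeSupNorm]
      refine csSup_image hbd ?_
      rw [Real.sSup_empty]
      exact le_trans (Real.rpow_nonneg (hAnn T p) _) (le_ciSup hbd ⟨T, hTJ⟩)
    intro t ht
    exact le_of_le_of_eq (le_csSup hmemI.2 (Set.mem_image_of_mem _ ht)) hSsup
  have hS0 : 0 ≤ S :=
    le_trans (Real.rpow_nonneg (hAnn T p) _) (hgS T hTJ)
  have hAS : ∀ t ∈ J, (∫ x in Ω, |w x t| ^ p) ≤ S ^ p := by
    intro t ht
    have h1 : ((∫ x in Ω, |w x t| ^ p) ^ (1 / p)) ^ p ≤ S ^ p :=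
      Real.rpow_le_rpow (Real.rpow_nonneg (hAnn t p) _) (hgS t ht) hp0.le
    rwa [← Real.rpow_mul (hAnn t p), one_div, inv_mul_cancel₀ hp0.ne', Real.rpow_one] at h1
  -- pointwise bound on the time integrand
  set K := (S ^ p) ^ (r' / r) with hKdef
  have hK0 : 0 ≤ K := Real.rpow_nonneg (Real.rpow_nonneg hS0 _) _
  have hiee : 1 / e * (b / a) = r' / r := by
    rw [hedef, hadef, hbdef]; field_simp
  have hie' : 1 / e' * (b / a) = p / l := by
    rw [he'def, hadef, hbdef]; field_simp
  have hptw : ∀ t ∈ J, (∫ x in Ω, |w x t| ^ a) ^ (b / a) ≤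
      K * (∫ x in Ω, |w x t| ^ l) ^ (p / l) := by
    intro t tm
    calc (∫ x in Ω, |w x t| ^ a) ^ (b / a)
        ≤ ((∫ x in Ω, |w x t| ^ p) ^ (1 / e) * (∫ x in Ω, |w x t| ^ l) ^ (1 / e')) ^ (b / a) :=
          Real.rpow_le_rpow (hAnn t a) (hHold t tm) hba0.le
      _ = ((∫ x in Ω, |w x t| ^ p) ^ (1 / e)) ^ (b / a)
            * ((∫ x in Ω, |w x t| ^ l) ^ (1 / e')) ^ (b / a) :=
          Real.mul_rpow (Real.rpow_nonneg (hAnn t p) _) (Real.rpow_nonneg (hAnn t l) _)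
      _ = (∫ x in Ω, |w x t| ^ p) ^ (r' / r) * (∫ x in Ω, |w x t| ^ l) ^ (p / l) := by
          rw [← Real.rpow_mul (hAnn t p), ← Real.rpow_mul (hAnn t l), hiee, hie']
      _ ≤ K * (∫ x in Ω, |w x t| ^ l) ^ (p / l) := by
          refine mul_le_mul_of_nonneg_right ?_ (Real.rpow_nonneg (hAnn t l) _)
          rw [hKdef]
          exact Real.rpow_le_rpow (hAnn t p) (hAS t tm) (by positivity)
  -- time measurability & integrability
  have hCm : AEStronglyMeasurable (fun t => (∫ x in Ω, |w x t| ^ a) ^ (b / a))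
      (volume.restrict J) := by
    have h1 : Measurable fun z : ℝ × EuclideanSpace ℝ (Fin n) => w z.2 z.1 :=
      hmeas.comp measurable_swap
    have hsm : StronglyMeasurable fun t : ℝ => ∫ x in Ω, |w x t| ^ a :=
      ((((Real.continuous_rpow_const ha0.le).measurable).comp
        h1.abs).stronglyMeasurable).integral_prod_right'
    exact ((Real.continuous_rpow_const hba0.le).measurable.comp hsm.measurable).aestronglyMeasurable
  have hCint : IntegrableOn (fun t => (∫ x in Ω, |w x t| ^ a) ^ (b / a)) J := by
    refine Integrable.mono' (hmemS.2.const_mul K) hCm ?_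
    filter_upwards [ae_restrict_mem hJm] with t tm
    rw [Real.norm_of_nonneg (Real.rpow_nonneg (hAnn t a) _)]
    exact hptw t tm
  have hMem : MemMixed n a b Ω J w := ⟨hInt_a, hCint⟩
  refine ⟨hMem, ?_⟩
  -- the norm inequality
  set d := (n : ℝ) * p / (l * r') with hddef
  set I := ∫ t in J, (∫ x in Ω, |w x t| ^ a) ^ (b / a) with hIdef
  set Mp := ∫ t in J, (∫ x in Ω, |w x t| ^ l) ^ (p / l) with hMpdef
  have hI0 : 0 ≤ I := integral_nonneg fun t => Real.rpow_nonneg (hAnn t a) _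
  have hMp0 : 0 ≤ Mp := integral_nonneg fun t => Real.rpow_nonneg (hAnn t l) _
  have hIle : I ≤ K * Mp := by
    rw [hIdef, hMpdef, ← integral_const_mul]
    exact setIntegral_mono_on hCint (hmemS.2.const_mul K) hJm hptw
  have hpb : 1 / b * p = 1 / r' := by rw [hbdef]; field_simp
  have hNp : mixedNorm n a b Ω J w ^ p = I ^ (1 / r') := by
    rw [mixedNorm, ← hIdef, ← Real.rpow_mul hI0, hpb]
  have hMps : mixedNorm n l p Ω J w ^ p = Mp := by
    rw [mixedNorm, ← hMpdef, ← Real.rpow_mul hMp0, one_div, inv_mul_cancel₀ hp0.ne',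
      Real.rpow_one]
  rw [hNp, hMps]
  -- Young's inequality step
  have hconr : r.HolderConjugate r' := by
    rw [Real.holderConjugate_iff]
    constructor
    · exact hr1
    · rw [hr'def]; field_simp; ring
  have hchain : I ^ (1 / r') ≤ S ^ (p / r) * Mp ^ (1 / r') := by
    calc I ^ (1 / r') ≤ (K * Mp) ^ (1 / r') :=
          Real.rpow_le_rpow hI0 hIle (by positivity)
      _ = K ^ (1 / r') * Mp ^ (1 / r') := Real.mul_rpow hK0 hMp0
      _ = S ^ (p / r) * Mp ^ (1 / r') := by
          rw [hKdef, ← Real.rpow_mul (Real.rpow_nonneg hS0 _), ← Real.rpow_mul hS0]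
          congr 1
          rw [show p * (r' / r * (1 / r')) = p / r by field_simp]
  have hyoung : S ^ (p / r) * Mp ^ (1 / r') ≤
      R ^ d * S ^ p + R ^ d * R ^ (-(n : ℝ) * p / l) * Mp := by
    set a0 := (R ^ d * S ^ p) ^ (1 / r) with ha0def
    set b0 := (R ^ d * R ^ (-(n : ℝ) * p / l) * Mp) ^ (1 / r') with hb0def
    have ha0n : 0 ≤ a0 := Real.rpow_nonneg (by positivity) _
    have hb0n : 0 ≤ b0 := by
      apply Real.rpow_nonneg
      have := Real.rpow_nonneg hR.le d
      positivity
    have hy := Real.young_inequality_of_nonneg ha0n hb0n hconr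
    have ha0r : a0 ^ r = R ^ d * S ^ p := by
      rw [ha0def, ← Real.rpow_mul (by positivity), one_div, inv_mul_cancel₀ hr0.ne',
        Real.rpow_one]
    have hb0r : b0 ^ r' = R ^ d * R ^ (-(n : ℝ) * p / l) * Mp := by
      have hnn : (0:ℝ) ≤ R ^ d * R ^ (-(n : ℝ) * p / l) * Mp := by
        have h1 := Real.rpow_nonneg hR.le d
        have h2 := Real.rpow_nonneg hR.le (-(n : ℝ) * p / l)
        positivity
      rw [hb0def, ← Real.rpow_mul hnn, one_div, inv_mul_cancel₀ (by positivity : r' ≠ 0),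
        Real.rpow_one]
    have hab : a0 * b0 = S ^ (p / r) * Mp ^ (1 / r') := by
      rw [ha0def, hb0def, ← Real.rpow_add hR, Real.mul_rpow (by positivity) (by positivity),
        Real.mul_rpow (by positivity : (0:ℝ) ≤ R ^ (d + -(n:ℝ) * p / l)) hMp0,
        ← Real.rpow_mul hR.le, ← Real.rpow_mul hR.le, ← Real.rpow_mul hS0]
      have hz : d * (1 / r) + (d + -(n : ℝ) * p / l) * (1 / r') = 0 := by
        have h1 : (n : ℝ) * p / l * (1 / r') = d := by
          rw [hddef]; field_simp
        have h2 : d * (1 / r) + d * (1 / r') = d := by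
          calc d * (1 / r) + d * (1 / r') = d * (1 / r + 1 / r') := by ring
            _ = d := by rw [hrr', mul_one]
        have h3 : (d + -(n : ℝ) * p / l) * (1 / r')
            = d * (1 / r') - (n : ℝ) * p / l * (1 / r') := by ring
        rw [h3, h1]
        linarith [h2]
      rw [show (d + -(n : ℝ) * p / l) * (1 / r') = d * (1 / r') + -(n:ℝ) * p / l * (1/r') by ring]
      rw [show p * (1 / r) = p / r by ring]
      calc R ^ (d * (1 / r)) * S ^ (p / r) * (R ^ (d * (1 / r')
              + -(n : ℝ) * p / l * (1 / r')) * Mp ^ (1 / r'))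
          = (R ^ (d * (1 / r)) * R ^ (d * (1 / r') + -(n : ℝ) * p / l * (1 / r')))
            * (S ^ (p / r) * Mp ^ (1 / r')) := by ring
        _ = R ^ (d * (1 / r) + (d * (1 / r') + -(n : ℝ) * p / l * (1 / r')))
            * (S ^ (p / r) * Mp ^ (1 / r')) := by rw [← Real.rpow_add hR]
        _ = S ^ (p / r) * Mp ^ (1 / r') := by
            rw [show d * (1 / r) + (d * (1 / r') + -(n : ℝ) * p / l * (1 / r'))
                = d * (1 / r) + (d + -(n : ℝ) * p / l) * (1 / r') by ring, hz,
              Real.rpow_zero, one_mul]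
    rw [hab, ha0r, hb0r] at hy
    have hd1 : R ^ d * S ^ p / r ≤ R ^ d * S ^ p := by
      apply div_le_self (by positivity) hr
    have hd2 : R ^ d * R ^ (-(n : ℝ) * p / l) * Mp / r' ≤ R ^ d * R ^ (-(n : ℝ) * p / l) * Mp := by
      apply div_le_self ?_ hr'1.le
      have h1 := Real.rpow_nonneg hR.le d
      have h2 := Real.rpow_nonneg hR.le (-(n : ℝ) * p / l)
      positivity
    linarith
  calc I ^ (1 / r') ≤ S ^ (p / r) * Mp ^ (1 / r') := hchain
    _ ≤ R ^ d * S ^ p + R ^ d * R ^ (-(n : ℝ) * p / l) * Mp := hyoung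
    _ = R ^ d * (S ^ p + R ^ (-(n : ℝ) * p / l) * Mp) := by ring
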